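/- Let (K^(n))_{n≥1} be a family of CPTNI monotone metrics, let n ≥ 2, and let ρ = diag(p₁,…,pₙ) be a diagonal positive definite n×n matrix with Tr ρ ≤ 1. Then K^(n)_ρ(E₁₂^(n), E₁₂^(n)) = K^(2)_{diag(p₁,p₂)}(E₁₂^(2), E₁₂^(2)), where E₁₂^(n) denotes the n×n matrix unit with a single 1 in position (1,2); in particular this value depends only on p₁ and p₂. -/

import Mathlib

open Matrix ComplexOrder

/-- Functional calculus for (Hermitian) matrices: apply `f` to each eigenvalue. -/
noncomputable def herCFC {n : ℕ} (f : ℝ → ℝ) (A : Matrix (Fin n) (Fin n) ℂ) :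
    Matrix (Fin n) (Fin n) ℂ :=
  if h : A.IsHermitian then
    (h.eigenvectorUnitary : Matrix (Fin n) (Fin n) ℂ) *
      Matrix.diagonal (fun i => (f (h.eigenvalues i) : ℂ)) *
      (star (h.eigenvectorUnitary : Matrix (Fin n) (Fin n) ℂ))
  else 0

/-- `f : (0,∞) → (0,∞)` is operator monotone. -/
def OperatorMonotone (f : ℝ → ℝ) : Prop :=
  (∀ x : ℝ, 0 < x → 0 < f x) ∧
  ∀ (n : ℕ) (A B : Matrix (Fin n) (Fin n) ℂ), A.PosDef → B.PosDef →
    (B - A).PosSemidef → (herCFC f B - herCFC f A).PosSemidef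

/-- `T` is completely positive and trace non-increasing. -/
def IsCPTNI {n m : ℕ} (T : Matrix (Fin n) (Fin n) ℂ → Matrix (Fin m) (Fin m) ℂ) : Prop :=
  ∃ (k : ℕ) (A : Fin k → Matrix (Fin m) (Fin n) ℂ),
    (∀ X, T X = ∑ i, A i * X * (A i)ᴴ) ∧
    ((1 : Matrix (Fin n) (Fin n) ℂ) - ∑ i, (A i)ᴴ * A i).PosSemidef

/-- `K` is an inner product on the space of `n × n` complex matrices. -/
def IsInnerProduct {n : ℕ}
    (K : Matrix (Fin n) (Fin n) ℂ → Matrix (Fin n) (Fin n) ℂ → ℂ) : Prop :=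
  (∀ X Y Z, K (X + Y) Z = K X Z + K Y Z) ∧
  (∀ X Y Z, K X (Y + Z) = K X Y + K X Z) ∧
  (∀ (c : ℂ) (X Y : Matrix (Fin n) (Fin n) ℂ), K X (c • Y) = c * K X Y) ∧
  (∀ (c : ℂ) (X Y : Matrix (Fin n) (Fin n) ℂ), K (c • X) Y = (starRingEnd ℂ) c * K X Y) ∧
  (∀ X Y, K Y X = (starRingEnd ℂ) (K X Y)) ∧
  (∀ X, X ≠ 0 → 0 < (K X X).re)

/-- A family of CPTNI monotone metrics. -/
def MonotoneMetricFamily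
    (K : (n : ℕ) → Matrix (Fin n) (Fin n) ℂ →
      Matrix (Fin n) (Fin n) ℂ → Matrix (Fin n) (Fin n) ℂ → ℂ) : Prop :=
  (∀ (n : ℕ) (ρ : Matrix (Fin n) (Fin n) ℂ), ρ.PosDef → ρ.trace.re ≤ 1 →
    IsInnerProduct (K n ρ)) ∧
  (∀ (n m : ℕ) (T : Matrix (Fin n) (Fin n) ℂ → Matrix (Fin m) (Fin m) ℂ), IsCPTNI T →
    ∀ (σ : Matrix (Fin m) (Fin m) ℂ), σ.PosSemidef →
    ∀ (ρ : Matrix (Fin n) (Fin n) ℂ), ρ.PosDef → ρ.trace.re ≤ 1 →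
    (T ρ + σ).PosDef → (T ρ + σ).trace.re ≤ 1 →
    ∀ (X : Matrix (Fin n) (Fin n) ℂ),
      (K m (T ρ + σ) (T X) (T X)).re ≤ (K n ρ X X).re)

section aux
variable {n : ℕ} (hn : 2 ≤ n)

noncomputable def Vmat (hn : 2 ≤ n) : Matrix (Fin 2) (Fin n) ℂ :=
  Matrix.of fun i j => if j = Fin.castLE hn i then 1 else 0

lemma Vmat_mul_conjTranspose : Vmat hn * (Vmat hn)ᴴ = 1 := by
  ext i j
  simp [Vmat, Matrix.mul_apply, Matrix.conjTranspose_apply, apply_ite (starRingEnd ℂ),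
    ite_mul, mul_ite, Finset.sum_ite_eq', Matrix.one_apply, eq_comm]

lemma conjTranspose_mul_Vmat :
    (Vmat hn)ᴴ * Vmat hn =
      Matrix.diagonal (fun j : Fin n => if (j : ℕ) < 2 then 1 else 0) := by
  ext a b
  simp only [Vmat, Matrix.mul_apply, Matrix.conjTranspose_apply, Matrix.of_apply,
    apply_ite (starRingEnd ℂ), _root_.map_one, map_zero, ite_mul, mul_ite, one_mul, mul_one,
    Fin.sum_univ_two, Matrix.diagonal_apply]
  rcases eq_or_ne a b with rfl | hab
  · simp only [if_pos rfl]
    by_cases h0 : a = Fin.castLE hn 0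
    · have : (a : ℕ) = 0 := by simpa [Fin.ext_iff] using h0
      simp [h0, show a ≠ Fin.castLE hn 1 by simp [Fin.ext_iff, this], this]
    · by_cases h1 : a = Fin.castLE hn 1
      · have : (a : ℕ) = 1 := by simpa [Fin.ext_iff] using h1
        simp [h0, h1, this]
      · have ha0 : (a : ℕ) ≠ 0 := by simpa [Fin.ext_iff] using h0
        have ha1 : (a : ℕ) ≠ 1 := by simpa [Fin.ext_iff] using h1
        simp [h0, h1, show ¬ (a : ℕ) < 2 by omega]
  · simp only [if_neg hab]
    by_cases h0 : a = Fin.castLE hn 0 <;> by_cases h1 : b = Fin.castLE hn 0 <;>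
      by_cases h2 : a = Fin.castLE hn 1 <;> by_cases h3 : b = Fin.castLE hn 1 <;>
      simp_all

lemma Vmat_compress (X : Matrix (Fin n) (Fin n) ℂ) :
    Vmat hn * X * (Vmat hn)ᴴ =
      Matrix.of fun i j : Fin 2 => X (Fin.castLE hn i) (Fin.castLE hn j) := by
  ext i j
  simp [Vmat, Matrix.mul_apply, Matrix.conjTranspose_apply, apply_ite (starRingEnd ℂ),
    ite_mul, mul_ite, Finset.sum_ite_eq']

lemma Vmat_expand (Y : Matrix (Fin 2) (Fin 2) ℂ) (a b : Fin n) :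
    ((Vmat hn)ᴴ * Y * Vmat hn) a b =
      (if a = Fin.castLE hn 0 then (if b = Fin.castLE hn 0 then Y 0 0 else 0)
          + (if b = Fin.castLE hn 1 then Y 0 1 else 0) else 0)
      + (if a = Fin.castLE hn 1 then (if b = Fin.castLE hn 0 then Y 1 0 else 0)
          + (if b = Fin.castLE hn 1 then Y 1 1 else 0) else 0) := by
  simp [Vmat, Matrix.mul_apply, Matrix.conjTranspose_apply, apply_ite (starRingEnd ℂ),
    ite_mul, mul_ite, Fin.sum_univ_two, add_mul, Finset.sum_add_distrib]
  split_ifs <;> ring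

end aux

/-- for a diagonal positive definite state, the value of a CPTNI monotone
metric on the matrix unit `E₁₂` depends only on `p₁` and `p₂`. -/
theorem stmt6
    (K : (n : ℕ) → Matrix (Fin n) (Fin n) ℂ →
      Matrix (Fin n) (Fin n) ℂ → Matrix (Fin n) (Fin n) ℂ → ℂ)
    (hK : MonotoneMetricFamily K)
    (n : ℕ) (hn : 2 ≤ n) (p : Fin n → ℝ)
    (hρ : (Matrix.diagonal (fun i => (p i : ℂ))).PosDef)
    (htr : (Matrix.diagonal (fun i => (p i : ℂ))).trace.re ≤ 1) :
    K n (Matrix.diagonal (fun i => (p i : ℂ)))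
      (Matrix.single (⟨0, by omega⟩ : Fin n) (⟨1, by omega⟩ : Fin n) 1)
      (Matrix.single (⟨0, by omega⟩ : Fin n) (⟨1, by omega⟩ : Fin n) 1) =
    K 2 (Matrix.diagonal ![(p ⟨0, by omega⟩ : ℂ), (p ⟨1, by omega⟩ : ℂ)])
      (Matrix.single 0 1 1) (Matrix.single 0 1 1) := by
  set c0 : Fin n := Fin.castLE hn 0 with hc0
  set c1 : Fin n := Fin.castLE hn 1 with hc1
  have hc0v : (c0 : ℕ) = 0 := rfl
  have hc1v : (c1 : ℕ) = 1 := rfl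
  have hc01 : c0 ≠ c1 := by simp [hc0, hc1, Fin.ext_iff]
  set ρn : Matrix (Fin n) (Fin n) ℂ := Matrix.diagonal (fun i => (p i : ℂ)) with hρn
  set ρ2 : Matrix (Fin 2) (Fin 2) ℂ :=
    Matrix.diagonal ![(p c0 : ℂ), (p c1 : ℂ)] with hρ2def
  set En : Matrix (Fin n) (Fin n) ℂ := Matrix.single c0 c1 1 with hEn
  set E2 : Matrix (Fin 2) (Fin 2) ℂ := Matrix.single 0 1 1 with hE2
  -- positivity of p
  have hp : ∀ i, 0 < p i := fun i => by
    have := Matrix.posDef_diagonal_iff.mp hρ i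
    exact_mod_cast this
  -- traces
  have htr' : ∑ i, p i ≤ 1 := by
    have : ρn.trace.re = ∑ i, p i := by
      simp [hρn, Matrix.trace_diagonal, Complex.re_sum]
    rw [← this]; exact htr
  have hsum2 : p c0 + p c1 ≤ ∑ i, p i := by
    have hsub : ({c0, c1} : Finset (Fin n)) ⊆ Finset.univ := Finset.subset_univ _
    have := Finset.sum_le_sum_of_subset_of_nonneg hsub
      (fun i _ _ => (hp i).le)
    simpa [Finset.sum_pair hc01] using this
  have hρ2 : ρ2.PosDef := by
    refine Matrix.posDef_diagonal_iff.mpr fun i => ?_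
    fin_cases i <;> simp <;> exact_mod_cast hp _
  have htr2 : ρ2.trace.re ≤ 1 := by
    have : ρ2.trace.re = p c0 + p c1 := by
      simp [hρ2def, Matrix.trace_diagonal, Fin.sum_univ_two]
    rw [this]; linarith
  -- the two CPTNI maps
  set T : Matrix (Fin n) (Fin n) ℂ → Matrix (Fin 2) (Fin 2) ℂ :=
    fun X => Vmat hn * X * (Vmat hn)ᴴ with hT
  set S : Matrix (Fin 2) (Fin 2) ℂ → Matrix (Fin n) (Fin n) ℂ :=
    fun Y => (Vmat hn)ᴴ * Y * Vmat hn with hS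
  have hTcp : IsCPTNI T := by
    refine ⟨1, fun _ => Vmat hn, fun X => by simp [hT], ?_⟩
    rw [Fin.sum_univ_one, conjTranspose_mul_Vmat]
    have : (1 : Matrix (Fin n) (Fin n) ℂ) -
        Matrix.diagonal (fun j : Fin n => if (j : ℕ) < 2 then 1 else 0) =
        Matrix.diagonal (fun j : Fin n => if (j : ℕ) < 2 then 0 else 1) := by
      ext i j
      rcases eq_or_ne i j with rfl | hij
      · simp [Matrix.one_apply, Matrix.diagonal_apply]; split_ifs <;> ring
      · simp [Matrix.one_apply, Matrix.diagonal_apply, hij]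
    rw [this]
    exact Matrix.posSemidef_diagonal_iff.mpr fun j => by split_ifs <;> norm_num
  have hScp : IsCPTNI S := by
    refine ⟨1, fun _ => (Vmat hn)ᴴ, fun X => by simp [hS], ?_⟩
    rw [Fin.sum_univ_one, Matrix.conjTranspose_conjTranspose, Vmat_mul_conjTranspose,
      sub_self]
    exact Matrix.PosSemidef.zero
  -- images
  have hTρ : T ρn = ρ2 := by
    show Vmat hn * _ * (Vmat hn)ᴴ = _
    rw [Vmat_compress]
    ext i j
    fin_cases i <;> fin_cases j <;>
      simp [hρn, hρ2def, Matrix.diagonal_apply, ← hc0, ← hc1, hc01, hc01.symm]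
  have hTE : T En = E2 := by
    show Vmat hn * _ * (Vmat hn)ᴴ = _
    rw [Vmat_compress]
    ext i j
    fin_cases i <;> fin_cases j <;>
      simp [hEn, hE2, Matrix.single, ← hc0, ← hc1, hc01, hc01.symm]
  set σ : Matrix (Fin n) (Fin n) ℂ :=
    Matrix.diagonal (fun j : Fin n => if j = c0 ∨ j = c1 then 0 else (p j : ℂ)) with hσdef
  have hσ : σ.PosSemidef := by
    refine Matrix.posSemidef_diagonal_iff.mpr fun j => ?_
    split_ifs
    · exact le_rfl
    · exact_mod_cast (hp j).le
  have hSρ : S ρ2 + σ = ρn := by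
    ext a b
    show ((Vmat hn)ᴴ * ρ2 * Vmat hn) a b + σ a b = _
    rw [Vmat_expand]
    rcases eq_or_ne a c0 with rfl | h0
    · rcases eq_or_ne b c0 with rfl | h2
      · simp [hσdef, hρ2def, hρn, Matrix.diagonal_apply, hc01, hc01.symm, ← hc0, ← hc1]
      · rcases eq_or_ne b c1 with rfl | h3
        · simp [hσdef, hρ2def, hρn, Matrix.diagonal_apply, hc01, hc01.symm, ← hc0, ← hc1]
        · simp [hσdef, hρ2def, hρn, Matrix.diagonal_apply, hc01, hc01.symm, ← hc0, ← hc1,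
            h2, h3, Ne.symm h2, Ne.symm h3]
    · rcases eq_or_ne a c1 with rfl | h1
      · rcases eq_or_ne b c1 with rfl | h3
        · simp [hσdef, hρ2def, hρn, Matrix.diagonal_apply, hc01, hc01.symm, ← hc0, ← hc1]
        · rcases eq_or_ne b c0 with rfl | h2
          · simp [hσdef, hρ2def, hρn, Matrix.diagonal_apply, hc01, hc01.symm, ← hc0, ← hc1]
          · simp [hσdef, hρ2def, hρn, Matrix.diagonal_apply, hc01, hc01.symm, ← hc0, ← hc1,
              h2, h3, Ne.symm h2, Ne.symm h3]
      · rcases eq_or_ne a b with rfl | hab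
        · simp [hσdef, hρn, Matrix.diagonal_apply, ← hc0, ← hc1, h0, h1]
        · simp [hσdef, hρn, Matrix.diagonal_apply, ← hc0, ← hc1, h0, h1, hab]
  have hSE : S E2 + σ * 0 = En := by
    rw [mul_zero, add_zero]
    ext a b
    show ((Vmat hn)ᴴ * E2 * Vmat hn) a b = En a b
    rw [Vmat_expand]
    simp only [hE2, hEn, Matrix.single]
    simp only [Matrix.of_apply, ← hc0, ← hc1]
    rcases eq_or_ne a c0 with rfl | h0
    · rcases eq_or_ne b c1 with rfl | h3
      · simp [hc01, hc01.symm]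
      · simp [hc01, hc01.symm, h3, Ne.symm h3]
    · simp [hc01, hc01.symm, h0, Ne.symm h0]
  -- monotonicity, both directions
  have key1 : (K 2 ρ2 E2 E2).re ≤ (K n ρn En En).re := by
    have h := hK.2 n 2 T hTcp 0 Matrix.PosSemidef.zero ρn hρ htr
      (by rw [hTρ, add_zero]; exact hρ2) (by rw [hTρ, add_zero]; exact htr2) En
    rw [hTρ, hTE, add_zero] at h
    exact h
  have key2 : (K n ρn En En).re ≤ (K 2 ρ2 E2 E2).re := by
    have hSρ' : S ρ2 + σ = ρn := hSρ
    have h := hK.2 2 n S hScp σ hσ ρ2 hρ2 htr2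
      (by rw [hSρ]; exact hρ) (by rw [hSρ]; exact htr) E2
    rw [hSρ] at h
    have hSE' : S E2 = En := by have := hSE; rwa [mul_zero, add_zero] at this
    rw [hSE'] at h
    exact h
  -- realness
  have ipn := hK.1 n ρn hρ htr
  have ip2 := hK.1 2 ρ2 hρ2 htr2
  have imn : (K n ρn En En).im = 0 :=
    Complex.conj_eq_iff_im.mp (ipn.2.2.2.2.1 En En).symm
  have im2 : (K 2 ρ2 E2 E2).im = 0 :=
    Complex.conj_eq_iff_im.mp (ip2.2.2.2.2.1 E2 E2).symm
  have : K n ρn En En = K 2 ρ2 E2 E2 :=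
    Complex.ext (le_antisymm key2 key1) (by rw [imn, im2])
  exact this
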